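/- arXiv:0904.1669 — 5 statements merged into one kernel-verified Lean document; each statement's English description precedes it below -/
import Mathlib

section
/- Let G be a standard Gaussian random variable, μ ∈ ℝ, σ ≥ 0, u > 0, and m ∈ ℝ. Define f̃(u,z) = (|z|/√(2πu³))·exp(−(z−mu)²/(2u)) for u > 0. Then E[f̃(u, μ+σG)·1_{μ+σG>0}] = (1/√(2π))·E[exp(−(μ−mu)²/(2(σ²+u)))·max((μ+σ²m)/(σ²+u)^{3/2} + σG/(√u·(σ²+u)), 0)]. -/
open Real MeasureTheory ProbabilityTheory

lemma integral_gaussianReal01 (f : ℝ → ℝ) :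
    ∫ x, f x ∂(gaussianReal 0 1)
      = ∫ x, ((Real.sqrt (2 * π))⁻¹ * Real.exp (-x ^ 2 / 2)) * f x := by
  rw [gaussianReal_of_var_ne_zero _ one_ne_zero]
  have h : gaussianPDF 0 1
      = fun x => ((Real.toNNReal (gaussianPDFReal 0 1 x) : NNReal) : ENNReal) := rfl
  rw [h, integral_withDensity_eq_integral_smul ((measurable_gaussianPDFReal 0 1).real_toNNReal)]
  congr 1
  ext x
  rw [NNReal.smul_def, Real.coe_toNNReal _ (gaussianPDFReal_nonneg _ _ _)]
  simp [gaussianPDFReal, smul_eq_mul]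

/-- First passage density of Brownian motion with drift `m`, extended by `0` for `u ≤ 0`. -/
noncomputable def ftilde (m : ℝ) (u z : ℝ) : ℝ :=
  if 0 < u then |z| / Real.sqrt (2 * π * u ^ 3) * Real.exp (-(z - m * u) ^ 2 / (2 * u)) else 0

/-- For a standard Gaussian `G`, `μ ∈ ℝ`, `σ ≥ 0`, `u > 0`:
`E[f̃(u, μ+σG) 1_{μ+σG>0}]
  = (2π)^{-1/2} E[exp(-(μ-mu)²/(2(σ²+u))) ((μ+σ²m)/(σ²+u)^{3/2} + σG/(√u (σ²+u)))₊]`. -/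
theorem stmt_0 (m μ σ u : ℝ) (hσ : 0 ≤ σ) (hu : 0 < u) :
    (∫ g, ftilde m u (μ + σ * g) * (if 0 < μ + σ * g then (1:ℝ) else 0)
        ∂(gaussianReal 0 1))
      = (1 / Real.sqrt (2 * π)) *
        ∫ g, Real.exp (-(μ - m * u) ^ 2 / (2 * (σ ^ 2 + u))) *
          max ((μ + σ ^ 2 * m) / (σ ^ 2 + u) ^ ((3:ℝ)/2)
            + σ * g / (Real.sqrt u * (σ ^ 2 + u))) 0 ∂(gaussianReal 0 1) := by
  have h2π : (0:ℝ) < 2 * π := by positivity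
  set su := Real.sqrt u with hsu_def
  have hsu0 : 0 < su := Real.sqrt_pos.mpr hu
  have hsu2 : su ^ 2 = u := Real.sq_sqrt hu.le
  have hu32 : u ^ ((3:ℝ)/2) = su ^ 3 := by
    rw [← hsu2, ← Real.rpow_natCast su 2, ← Real.rpow_mul hsu0.le, ← Real.rpow_natCast su 3]
    norm_num
  have hsqrt3 : Real.sqrt (2 * π * u ^ 3) = Real.sqrt (2 * π) * su ^ 3 := by
    rw [show 2 * π * u ^ 3 = (2 * π) * (su ^ 3) ^ 2 by rw [← hsu2]; ring,
      Real.sqrt_mul h2π.le, Real.sqrt_sq (by positivity)]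
  have hmax : ∀ z : ℝ, ftilde m u z * (if 0 < z then (1:ℝ) else 0)
      = max z 0 / (Real.sqrt (2 * π) * su ^ 3) * Real.exp (-(z - m * u) ^ 2 / (2 * u)) := by
    intro z
    rw [ftilde, if_pos hu, hsqrt3]
    rcases lt_or_ge 0 z with hz | hz
    · rw [if_pos hz, abs_of_pos hz, max_eq_left hz.le]; ring
    · rw [if_neg (not_lt.mpr hz), max_eq_right hz, mul_zero, zero_div, zero_mul]
  rcases eq_or_lt_of_le hσ with hσ0 | hσpos
  · -- σ = 0 case
    subst hσ0
    simp only [zero_mul, add_zero, zero_add, zero_div, ne_eq, OfNat.ofNat_ne_zero,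
      not_false_eq_true, zero_pow]
    rw [integral_const, integral_const, probReal_univ, one_smul, one_smul,
      hmax μ, hu32]
    rw [show max (μ / su ^ 3) 0 = (su ^ 3)⁻¹ * max μ 0 by
      rw [mul_max_of_nonneg _ _ (by positivity : (0:ℝ) ≤ (su ^ 3)⁻¹), mul_zero, inv_mul_eq_div]]
    field_simp
  · -- σ > 0 case
    have hT : (0:ℝ) < σ ^ 2 + u := by positivity
    set sT := Real.sqrt (σ ^ 2 + u) with hsT_def
    have hsT0 : 0 < sT := Real.sqrt_pos.mpr hT
    have hsT2 : sT ^ 2 = σ ^ 2 + u := Real.sq_sqrt hT.le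
    have hT32 : (σ ^ 2 + u) ^ ((3:ℝ)/2) = sT ^ 3 := by
      rw [← hsT2, ← Real.rpow_natCast sT 2, ← Real.rpow_mul hsT0.le, ← Real.rpow_natCast sT 3]
      norm_num
    set a : ℝ := u * (μ + σ ^ 2 * m) / (σ ^ 2 + u) with ha_def
    set ρ : ℝ := σ * su / sT with hρ_def
    have hρ0 : 0 < ρ := by positivity
    have hρ2 : ρ ^ 2 = σ ^ 2 * u / (σ ^ 2 + u) := by
      rw [hρ_def, div_pow, mul_pow, hsu2, hsT2]
    set Ψ : ℝ → ℝ := fun z => (Real.sqrt (2 * π))⁻¹ * Real.exp (-((z - μ) / σ) ^ 2 / 2) *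
      (ftilde m u z * (if 0 < z then (1:ℝ) else 0)) with hΨ_def
    set Θ : ℝ → ℝ := fun z => (Real.sqrt (2 * π))⁻¹ * Real.exp (-((z - a) / ρ) ^ 2 / 2) *
      (Real.exp (-(μ - m * u) ^ 2 / (2 * (σ ^ 2 + u))) *
        max ((μ + σ ^ 2 * m) / (σ ^ 2 + u) ^ ((3:ℝ)/2)
          + σ * ((z - a) / ρ) / (su * (σ ^ 2 + u))) 0) with hΘ_def
    have key1 : (∫ g, ftilde m u (μ + σ * g) * (if 0 < μ + σ * g then (1:ℝ) else 0)
        ∂(gaussianReal 0 1)) = |σ⁻¹| • ∫ z, Ψ z := by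
      rw [integral_gaussianReal01]
      calc ∫ x, ((Real.sqrt (2 * π))⁻¹ * Real.exp (-x ^ 2 / 2)) *
            (ftilde m u (μ + σ * x) * (if 0 < μ + σ * x then (1:ℝ) else 0))
          = ∫ x, (fun y => Ψ (y + μ)) (σ * x) := by
            refine integral_congr_ae (ae_of_all _ fun x => ?_)
            have hx : (σ * x + μ - μ) / σ = x := by field_simp; ring
            simp only [hΨ_def, hx]
            ring_nf
        _ = |σ⁻¹| • ∫ y, Ψ (y + μ) := Measure.integral_comp_mul_left (fun y => Ψ (y + μ)) σ
        _ = |σ⁻¹| • ∫ z, Ψ z := by rw [integral_add_right_eq_self]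
    have key2 : (∫ g, Real.exp (-(μ - m * u) ^ 2 / (2 * (σ ^ 2 + u))) *
          max ((μ + σ ^ 2 * m) / (σ ^ 2 + u) ^ ((3:ℝ)/2)
            + σ * g / (su * (σ ^ 2 + u))) 0 ∂(gaussianReal 0 1))
        = |ρ⁻¹| • ∫ z, Θ z := by
      rw [integral_gaussianReal01]
      calc ∫ x, ((Real.sqrt (2 * π))⁻¹ * Real.exp (-x ^ 2 / 2)) *
            (Real.exp (-(μ - m * u) ^ 2 / (2 * (σ ^ 2 + u))) *
              max ((μ + σ ^ 2 * m) / (σ ^ 2 + u) ^ ((3:ℝ)/2)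
                + σ * x / (su * (σ ^ 2 + u))) 0)
          = ∫ x, (fun y => Θ (y + a)) (ρ * x) := by
            refine integral_congr_ae (ae_of_all _ fun x => ?_)
            have hx : (ρ * x + a - a) / ρ = x := by field_simp; ring
            simp only [hΘ_def, hx]
        _ = |ρ⁻¹| • ∫ y, Θ (y + a) := Measure.integral_comp_mul_left (fun y => Θ (y + a)) ρ
        _ = |ρ⁻¹| • ∫ z, Θ z := by rw [integral_add_right_eq_self]
    rw [key1, key2, abs_of_pos (inv_pos.mpr hσpos), abs_of_pos (inv_pos.mpr hρ0),
      smul_eq_mul, smul_eq_mul, ← integral_const_mul, ← integral_const_mul, ← integral_const_mul]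
    refine integral_congr_ae (ae_of_all _ fun z => ?_)
    simp only [hΨ_def, hΘ_def]
    rw [hmax z]
    have hlin : (μ + σ ^ 2 * m) / (σ ^ 2 + u) ^ ((3:ℝ)/2)
        + σ * ((z - a) / ρ) / (su * (σ ^ 2 + u)) = (u * sT)⁻¹ * z := by
      rw [hT32, ha_def, hρ_def, ← hsT2, ← hsu2]
      field_simp
      ring
    rw [hlin, show max ((u * sT)⁻¹ * z) 0 = (u * sT)⁻¹ * max z 0 by
      rw [mul_max_of_nonneg _ _ (by positivity : (0:ℝ) ≤ (u * sT)⁻¹), mul_zero]]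
    have hexp : Real.exp (-((z - μ) / σ) ^ 2 / 2) * Real.exp (-(z - m * u) ^ 2 / (2 * u))
        = Real.exp (-((z - a) / ρ) ^ 2 / 2) *
          Real.exp (-(μ - m * u) ^ 2 / (2 * (σ ^ 2 + u))) := by
      rw [← Real.exp_add, ← Real.exp_add]
      congr 1
      rw [div_pow, div_pow, hρ2, ha_def]
      field_simp
      ring
    calc σ⁻¹ * ((Real.sqrt (2 * π))⁻¹ * Real.exp (-((z - μ) / σ) ^ 2 / 2) *
          (max z 0 / (Real.sqrt (2 * π) * su ^ 3) * Real.exp (-(z - m * u) ^ 2 / (2 * u))))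
        = (σ⁻¹ * (Real.sqrt (2 * π))⁻¹ * (Real.sqrt (2 * π) * su ^ 3)⁻¹ * max z 0) *
            (Real.exp (-((z - μ) / σ) ^ 2 / 2) * Real.exp (-(z - m * u) ^ 2 / (2 * u))) := by
          field_simp
      _ = (σ⁻¹ * (Real.sqrt (2 * π))⁻¹ * (Real.sqrt (2 * π) * su ^ 3)⁻¹ * max z 0) *
            (Real.exp (-((z - a) / ρ) ^ 2 / 2) *
              Real.exp (-(μ - m * u) ^ 2 / (2 * (σ ^ 2 + u)))) := by rw [hexp]
      _ = 1 / Real.sqrt (2 * π) * (ρ⁻¹ * ((Real.sqrt (2 * π))⁻¹ *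
            Real.exp (-((z - a) / ρ) ^ 2 / 2) *
            (Real.exp (-(μ - m * u) ^ 2 / (2 * (σ ^ 2 + u))) *
              ((u * sT)⁻¹ * max z 0)))) := by
          rw [hρ_def, ← hsu2]
          field_simp
end

section
/- Let m ∈ ℝ and define f̃(u,z) = (|z|/√(2πu³))·exp(−(z−mu)²/(2u)) for u > 0 and f̃(u,z) = 0 for u ≤ 0. For every ε > 0 and M ≥ 1 there exists a constant c > 0 (depending only on ε, M, m) such that for all u > 0 and all z ≠ 0: f̃(u,z) ≤ c·u^{−1+ε}·(|z|^{−4ε} + exp(2mz/M)). -/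
set_option maxHeartbeats 1000000


open Real

lemma texp_le (t : ℝ) (ht : 0 ≤ t) : t * Real.exp (-t) ≤ 1 := by
  rw [Real.exp_neg, ← div_eq_mul_inv, div_le_one (Real.exp_pos t)]
  linarith [Real.add_one_le_exp t]

lemma sqrt_mul_exp_le (t : ℝ) (ht : 0 ≤ t) : Real.sqrt t * Real.exp (-t) ≤ 1 := by
  rw [Real.exp_neg, ← div_eq_mul_inv, div_le_one (Real.exp_pos t)]
  rcases le_total t 1 with h | h
  · have h1 : Real.sqrt t ≤ 1 := by
      calc Real.sqrt t ≤ Real.sqrt 1 := Real.sqrt_le_sqrt h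
        _ = 1 := Real.sqrt_one
    linarith [Real.add_one_le_exp t]
  · have h1 : Real.sqrt t ≤ t := by
      calc Real.sqrt t ≤ Real.sqrt (t ^ 2) := Real.sqrt_le_sqrt (by nlinarith)
        _ = |t| := Real.sqrt_sq_eq_abs t
        _ = t := abs_of_nonneg ht
    linarith [Real.add_one_le_exp t]

lemma abs_mul_exp_le (x u : ℝ) (hu : 0 < u) :
    |x| * Real.exp (-x ^ 2 / (2 * u)) ≤ Real.sqrt 2 * Real.sqrt u := by
  have ht : 0 ≤ x ^ 2 / (2 * u) := by positivity
  have hx : |x| = Real.sqrt 2 * Real.sqrt u * Real.sqrt (x ^ 2 / (2 * u)) := by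
    rw [← Real.sqrt_mul (by norm_num : (0:ℝ) ≤ 2) u, ← Real.sqrt_mul (by positivity)]
    rw [show 2 * u * (x ^ 2 / (2 * u)) = x ^ 2 by field_simp]
    exact (Real.sqrt_sq_eq_abs x).symm
  rw [neg_div, hx, mul_assoc]
  exact mul_le_of_le_one_right
    (mul_nonneg (Real.sqrt_nonneg 2) (Real.sqrt_nonneg u)) (sqrt_mul_exp_le _ ht)

lemma rpow_exp_bound (q : ℝ) (hq : 0 ≤ q) :
    ∃ C : ℝ, 0 < C ∧ ∀ x : ℝ, 0 ≤ x → x ^ q * Real.exp (-x) ≤ C := by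
  obtain ⟨n, hn⟩ := exists_nat_ge q
  refine ⟨(n : ℝ) ^ n + 1, by positivity, fun x hx => ?_⟩
  have hexp : Real.exp (-x) ≤ 1 := Real.exp_le_one_iff.mpr (by linarith)
  have hexp0 : 0 ≤ Real.exp (-x) := (Real.exp_pos _).le
  rcases le_total x 1 with h | h
  · have h1 : x ^ q ≤ 1 := Real.rpow_le_one hx h hq
    have h0 : 0 ≤ x ^ q := Real.rpow_nonneg hx q
    nlinarith [pow_nonneg (n.cast_nonneg : (0:ℝ) ≤ n) n]
  · have h1 : x ^ q ≤ x ^ (n : ℕ) := by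
      rw [← Real.rpow_natCast x n]
      exact Real.rpow_le_rpow_of_exponent_le h hn
    have h2 : x ^ (n : ℕ) * Real.exp (-x) ≤ (n : ℝ) ^ n := by
      rcases Nat.eq_zero_or_pos n with rfl | hn0
      · simpa using hexp
      · have hnR : (0:ℝ) < n := Nat.cast_pos.mpr hn0
        have hxe : x * Real.exp (-(x / n)) ≤ n := by
          have ht := texp_le (x / n) (by positivity)
          rw [div_mul_eq_mul_div, div_le_one hnR] at ht
          linarith
        have hnx : (n:ℝ) * -(x / n) = -x := by field_simp
        calc x ^ (n : ℕ) * Real.exp (-x) = (x * Real.exp (-(x / n))) ^ (n : ℕ) := by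
              rw [mul_pow, ← Real.exp_nat_mul, hnx]
          _ ≤ (n : ℝ) ^ n := pow_le_pow_left₀ (mul_nonneg (by linarith) (Real.exp_pos _).le) hxe n
    calc x ^ q * Real.exp (-x) ≤ x ^ (n : ℕ) * Real.exp (-x) :=
          mul_le_mul_of_nonneg_right h1 hexp0
      _ ≤ (n : ℝ) ^ n := h2
      _ ≤ (n : ℝ) ^ n + 1 := by linarith

lemma rpow_exp_bound_scaled (q l : ℝ) (hq : 0 ≤ q) (hl : 0 < l) :
    ∃ C : ℝ, 0 < C ∧ ∀ x : ℝ, 0 ≤ x → x ^ q * Real.exp (-(l * x)) ≤ C := by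
  obtain ⟨C, hC, h⟩ := rpow_exp_bound q hq
  refine ⟨l ^ (-q) * C, by positivity, fun x hx => ?_⟩
  have h1 := h (l * x) (by positivity)
  rw [Real.mul_rpow hl.le hx] at h1
  have hinv : l ^ (-q) * l ^ q = 1 := by
    rw [← Real.rpow_add hl]; simp
  have h2 : x ^ q * Real.exp (-(l * x))
      = l ^ (-q) * (l ^ q * x ^ q * Real.exp (-(l * x))) := by
    rw [show l ^ (-q) * (l ^ q * x ^ q * Real.exp (-(l * x)))
        = (l ^ (-q) * l ^ q) * (x ^ q * Real.exp (-(l * x))) by ring, hinv, one_mul]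
  rw [h2]
  exact mul_le_mul_of_nonneg_left h1 (Real.rpow_nonneg hl.le _)

lemma caseA (m ε : ℝ) (hε : 0 < ε) :
    ∃ c : ℝ, 0 < c ∧ ∀ u z : ℝ, 0 < u → u ≤ 1 → z ≠ 0 →
      |z| * Real.exp (-(z - m * u) ^ 2 / (2 * u)) ≤
        c * u ^ ((1:ℝ)/2 + ε) * |z| ^ (-(4 * ε)) := by
  obtain ⟨C₁, hC₁, hC⟩ := rpow_exp_bound (1/2 + 2*ε) (by linarith)
  refine ⟨Real.exp (m ^ 2) * ((4:ℝ) ^ ((1:ℝ)/2 + 2*ε) * C₁), by positivity,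
    fun u z hu hu1 hz => ?_⟩
  have hz0 : 0 < |z| := abs_pos.mpr hz
  set a : ℝ := z ^ 2 / (4 * u) with ha
  have ha0 : 0 ≤ a := by positivity
  have hdiff : (m ^ 2 + -a) - (-(z - m * u) ^ 2 / (2 * u))
      = ((z - 2*m*u) ^ 2 + 2*m^2*u*(2 - u)) / (4 * u) := by
    rw [ha]; field_simp; ring
  have hE : -(z - m * u) ^ 2 / (2 * u) ≤ m ^ 2 + -a := by
    have hnum : 0 ≤ ((z - 2*m*u) ^ 2 + 2*m^2*u*(2 - u)) / (4 * u) := by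
      apply div_nonneg _ (by positivity)
      nlinarith [sq_nonneg (z - 2*m*u), mul_nonneg (mul_nonneg (sq_nonneg m) hu.le)
        (by linarith : (0:ℝ) ≤ 2 - u)]
    linarith [hdiff ▸ hnum]
  have hexp : Real.exp (-(z - m*u) ^ 2 / (2*u)) ≤ Real.exp (m^2) * Real.exp (-a) := by
    rw [← Real.exp_add]
    exact Real.exp_le_exp.mpr hE
  have hcore : |z| * Real.exp (-a) ≤
      (4:ℝ) ^ ((1:ℝ)/2 + 2*ε) * C₁ * u ^ ((1:ℝ)/2 + ε) * |z| ^ (-(4*ε)) := by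
    have hb : 0 < |z| ^ (4*ε) := Real.rpow_pos_of_pos hz0 _
    rw [Real.rpow_neg (abs_nonneg z), ← div_eq_mul_inv, le_div_iff₀ hb]
    have hzz : |z| * Real.exp (-a) * |z| ^ (4*ε)
        = |z| ^ ((1:ℝ) + 4*ε) * Real.exp (-a) := by
      rw [Real.rpow_add hz0, Real.rpow_one]; ring
    rw [hzz]
    have h1 : |z| ^ ((1:ℝ) + 4*ε)
        = (4*u) ^ ((1:ℝ)/2 + 2*ε) * a ^ ((1:ℝ)/2 + 2*ε) := by
      rw [← Real.mul_rpow (by positivity) ha0]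
      have h2 : 4 * u * a = |z| ^ (2:ℕ) := by rw [sq_abs, ha]; field_simp
      rw [h2, ← Real.rpow_natCast |z| 2, ← Real.rpow_mul (abs_nonneg z)]
      congr 1
      push_cast
      ring
    rw [h1, mul_assoc]
    calc (4*u) ^ ((1:ℝ)/2 + 2*ε) * (a ^ ((1:ℝ)/2 + 2*ε) * Real.exp (-a))
        ≤ (4*u) ^ ((1:ℝ)/2 + 2*ε) * C₁ :=
          mul_le_mul_of_nonneg_left (hC a ha0) (Real.rpow_nonneg (by positivity) _)
      _ = (4:ℝ) ^ ((1:ℝ)/2 + 2*ε) * C₁ * u ^ ((1:ℝ)/2 + 2*ε) := by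
          rw [Real.mul_rpow (by norm_num) hu.le]; ring
      _ ≤ (4:ℝ) ^ ((1:ℝ)/2 + 2*ε) * C₁ * u ^ ((1:ℝ)/2 + ε) := by
          apply mul_le_mul_of_nonneg_left
            (Real.rpow_le_rpow_of_exponent_ge hu hu1 (by linarith))
          positivity
  calc |z| * Real.exp (-(z - m * u) ^ 2 / (2 * u))
      ≤ |z| * (Real.exp (m^2) * Real.exp (-a)) :=
        mul_le_mul_of_nonneg_left hexp (abs_nonneg z)
    _ = Real.exp (m^2) * (|z| * Real.exp (-a)) := by ring
    _ ≤ Real.exp (m^2) * ((4:ℝ) ^ ((1:ℝ)/2 + 2*ε) * C₁ * u ^ ((1:ℝ)/2 + ε) * |z| ^ (-(4*ε))) :=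
        mul_le_mul_of_nonneg_left hcore (Real.exp_pos _).le
    _ = Real.exp (m ^ 2) * ((4:ℝ) ^ ((1:ℝ)/2 + 2*ε) * C₁) * u ^ ((1:ℝ)/2 + ε) * |z| ^ (-(4*ε)) := by
        ring

lemma caseB (m ε M : ℝ) (hε : 0 < ε) (hM : 1 ≤ M) :
    ∃ c : ℝ, 0 < c ∧ ∀ u z : ℝ, 1 ≤ u → z ≠ 0 →
      |z| * Real.exp (-(z - m * u) ^ 2 / (2 * u)) ≤
          c * u ^ ((1:ℝ)/2 + ε) * |z| ^ (-(4 * ε)) ∨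
      |z| * Real.exp (-(z - m * u) ^ 2 / (2 * u)) ≤
          c * u ^ ((1:ℝ)/2 + ε) * Real.exp (2 * m * z / M) := by
  have hM0 : (0:ℝ) < M := lt_of_lt_of_le one_pos hM
  have hup : ∀ u : ℝ, 1 ≤ u → Real.sqrt u ≤ u ^ ((1:ℝ)/2 + ε) := by
    intro u hu
    rw [Real.sqrt_eq_rpow]
    exact Real.rpow_le_rpow_of_exponent_le hu (by linarith)
  have hone : ∀ u : ℝ, 1 ≤ u → (1:ℝ) ≤ u ^ ((1:ℝ)/2 + ε) := by
    intro u hu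
    calc (1:ℝ) = u ^ (0:ℝ) := (Real.rpow_zero u).symm
      _ ≤ u ^ ((1:ℝ)/2 + ε) := Real.rpow_le_rpow_of_exponent_le hu (by linarith)
  rcases eq_or_ne m 0 with rfl | hm
  · refine ⟨Real.sqrt 2, by positivity, fun u z hu hz => Or.inr ?_⟩
    have hu0 : (0:ℝ) < u := lt_of_lt_of_le one_pos hu
    simp only [zero_mul, sub_zero, mul_zero, zero_div, Real.exp_zero, mul_one]
    calc |z| * Real.exp (-z ^ 2 / (2 * u)) ≤ Real.sqrt 2 * Real.sqrt u :=
          abs_mul_exp_le z u hu0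
      _ ≤ Real.sqrt 2 * u ^ ((1:ℝ)/2 + ε) :=
          mul_le_mul_of_nonneg_left (hup u hu) (Real.sqrt_nonneg 2)
  · have hm2 : (0:ℝ) < m ^ 2 := lt_of_le_of_ne (sq_nonneg m) (Ne.symm (pow_ne_zero 2 hm))
    rcases eq_or_lt_of_le hM with hM1 | hM1
    · -- M = 1
      subst hM1
      obtain ⟨C₁, hC₁, hC1⟩ := rpow_exp_bound (1/2 + 2*ε) (by linarith)
      obtain ⟨C₂, hC₂, hC2⟩ := rpow_exp_bound_scaled ε (m^2) hε.le hm2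
      refine ⟨(Real.sqrt 2 + |m| * (8 / m^2)) + (2:ℝ) ^ ((1:ℝ)/2 + 2*ε) * C₁ * C₂,
        by positivity, fun u z hu hz => ?_⟩
      have hu0 : (0:ℝ) < u := lt_of_lt_of_le one_pos hu
      have hz0 : 0 < |z| := abs_pos.mpr hz
      by_cases hbz : -(m^2*u)/2 ≤ m*z
      · right
        have hid : -(z - m*u) ^ 2 / (2*u) = 2*m*z + -(z + m*u) ^ 2 / (2*u) := by
          field_simp; ring
        have h1 : m^2*u/2 ≤ m*(z + m*u) := by nlinarith
        have h2' : (m^2*u/2) * (m^2*u/2) ≤ (m*(z + m*u)) * (m*(z + m*u)) :=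
          mul_self_le_mul_self (by positivity) h1
        have h3 : m^2*u/8 ≤ (z + m*u) ^ 2 / (2*u) := by
          rw [le_div_iff₀ (by positivity : (0:ℝ) < 2*u)]
          nlinarith [h2', hm2]
        have hexp2 : Real.exp (-(z + m*u) ^ 2 / (2*u)) ≤ Real.exp (-(m^2*u/8)) := by
          apply Real.exp_le_exp.mpr
          rw [neg_div]
          linarith
        have hsplit : |z| * Real.exp (-(z - m*u) ^ 2 / (2*u))
            = |z| * Real.exp (-(z + m*u) ^ 2 / (2*u)) * Real.exp (2*m*z) := by
          rw [hid, Real.exp_add]; ring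
        have hzb : |z| ≤ |z + m*u| + |m| * u := by
          calc |z| = |(z + m*u) + (-(m*u))| := by ring_nf
            _ ≤ |z + m*u| + |(-(m*u))| := abs_add_le _ _
            _ = |z + m*u| + |m| * u := by rw [abs_neg, abs_mul, abs_of_pos hu0]
        have hpart1 : |z + m*u| * Real.exp (-(z + m*u) ^ 2 / (2*u))
            ≤ Real.sqrt 2 * Real.sqrt u := abs_mul_exp_le _ u hu0
        have h8 : u * Real.exp (-(m^2*u/8)) ≤ 8 / m^2 := by
          rw [le_div_iff₀ hm2]
          nlinarith [texp_le (m^2*u/8) (by positivity)]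
        have hpart2 : |m| * u * Real.exp (-(m^2*u/8)) ≤ |m| * (8/m^2) := by
          calc |m| * u * Real.exp (-(m^2*u/8)) = |m| * (u * Real.exp (-(m^2*u/8))) := by ring
            _ ≤ |m| * (8/m^2) := mul_le_mul_of_nonneg_left h8 (abs_nonneg m)
        have hcomb : |z| * Real.exp (-(z + m*u) ^ 2 / (2*u))
            ≤ Real.sqrt 2 * Real.sqrt u + |m| * (8/m^2) := by
          calc |z| * Real.exp (-(z + m*u) ^ 2 / (2*u))
              ≤ (|z + m*u| + |m| * u) * Real.exp (-(z + m*u) ^ 2 / (2*u)) :=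
                mul_le_mul_of_nonneg_right hzb (Real.exp_pos _).le
            _ = |z + m*u| * Real.exp (-(z + m*u) ^ 2 / (2*u))
                + |m| * u * Real.exp (-(z + m*u) ^ 2 / (2*u)) := by ring
            _ ≤ Real.sqrt 2 * Real.sqrt u + |m| * u * Real.exp (-(m^2*u/8)) := by
                have := mul_le_mul_of_nonneg_left hexp2
                  (by positivity : (0:ℝ) ≤ |m| * u)
                linarith [hpart1]
            _ ≤ Real.sqrt 2 * Real.sqrt u + |m| * (8/m^2) := by linarith [hpart2]
        have hfin : Real.sqrt 2 * Real.sqrt u + |m| * (8/m^2)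
            ≤ (Real.sqrt 2 + |m| * (8/m^2)) * u ^ ((1:ℝ)/2 + ε) := by
          have hA := mul_le_mul_of_nonneg_left (hup u hu) (Real.sqrt_nonneg 2)
          have hB := mul_le_mul_of_nonneg_left (hone u hu)
            (by positivity : (0:ℝ) ≤ |m| * (8/m^2))
          nlinarith [hA, hB]
        rw [hsplit]
        have hcu : (0:ℝ) ≤ u ^ ((1:ℝ)/2 + ε) * Real.exp (2*m*z) := by positivity
        calc |z| * Real.exp (-(z + m*u) ^ 2 / (2*u)) * Real.exp (2*m*z)
            ≤ (Real.sqrt 2 + |m| * (8/m^2)) * u ^ ((1:ℝ)/2 + ε) * Real.exp (2*m*z) :=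
              mul_le_mul_of_nonneg_right (hcomb.trans hfin) (Real.exp_pos _).le
          _ ≤ ((Real.sqrt 2 + |m| * (8/m^2)) + (2:ℝ) ^ ((1:ℝ)/2 + 2*ε) * C₁ * C₂)
                * u ^ ((1:ℝ)/2 + ε) * Real.exp (2*m*z/1) := by
              rw [div_one]
              have h0 : (0:ℝ) ≤ (2:ℝ) ^ ((1:ℝ)/2 + 2*ε) * C₁ * C₂ := by positivity
              exact mul_le_mul_of_nonneg_right
                (mul_le_mul_of_nonneg_right (by linarith) (Real.rpow_nonneg hu0.le _))
                (Real.exp_pos _).le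
      · left
        push_neg at hbz
        have hexpb : -(z - m*u) ^ 2 / (2*u) ≤ -(z^2/(2*u)) + -(m^2*u) := by
          have hid2 : -(z - m*u) ^ 2 / (2*u) = -(z^2/(2*u)) + (m*z - m^2*u/2) := by
            field_simp; ring
          rw [hid2]
          linarith
        have h1 : |z| * Real.exp (-(z - m*u) ^ 2 / (2*u))
            ≤ |z| * (Real.exp (-(z^2/(2*u))) * Real.exp (-(m^2*u))) := by
          rw [← Real.exp_add]
          exact mul_le_mul_of_nonneg_left (Real.exp_le_exp.mpr hexpb) (abs_nonneg z)
        set a : ℝ := z^2/(2*u) with ha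
        have ha0 : 0 ≤ a := by positivity
        have hcore : |z| * (Real.exp (-a) * Real.exp (-(m^2*u)))
            ≤ (2:ℝ) ^ ((1:ℝ)/2 + 2*ε) * C₁ * C₂ * u ^ ((1:ℝ)/2 + ε) * |z| ^ (-(4*ε)) := by
          have hb : 0 < |z| ^ (4*ε) := Real.rpow_pos_of_pos hz0 _
          rw [Real.rpow_neg (abs_nonneg z), ← div_eq_mul_inv, le_div_iff₀ hb]
          have hzz : |z| * (Real.exp (-a) * Real.exp (-(m^2*u))) * |z| ^ (4*ε)
              = |z| ^ ((1:ℝ) + 4*ε) * Real.exp (-a) * Real.exp (-(m^2*u)) := by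
            rw [Real.rpow_add hz0, Real.rpow_one]; ring
          rw [hzz]
          have h1' : |z| ^ ((1:ℝ) + 4*ε)
              = (2*u) ^ ((1:ℝ)/2 + 2*ε) * a ^ ((1:ℝ)/2 + 2*ε) := by
            rw [← Real.mul_rpow (by positivity) ha0]
            have h2 : 2 * u * a = |z| ^ (2:ℕ) := by rw [sq_abs, ha]; field_simp
            rw [h2, ← Real.rpow_natCast |z| 2, ← Real.rpow_mul (abs_nonneg z)]
            congr 1
            push_cast
            ring
          have hus : u ^ ((1:ℝ)/2 + 2*ε) = u ^ ((1:ℝ)/2 + ε) * u ^ ε := by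
            rw [← Real.rpow_add hu0]
            ring_nf
          calc |z| ^ ((1:ℝ) + 4*ε) * Real.exp (-a) * Real.exp (-(m^2*u))
              = (2*u) ^ ((1:ℝ)/2 + 2*ε) * (a ^ ((1:ℝ)/2 + 2*ε) * Real.exp (-a))
                  * Real.exp (-(m^2*u)) := by rw [h1']; ring
            _ ≤ (2*u) ^ ((1:ℝ)/2 + 2*ε) * C₁ * Real.exp (-(m^2*u)) := by
                apply mul_le_mul_of_nonneg_right _ (Real.exp_pos _).le
                exact mul_le_mul_of_nonneg_left (hC1 a ha0)
                  (Real.rpow_nonneg (by positivity) _)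
            _ = (2:ℝ) ^ ((1:ℝ)/2 + 2*ε) * C₁ * u ^ ((1:ℝ)/2 + ε)
                  * (u ^ ε * Real.exp (-(m^2*u))) := by
                rw [Real.mul_rpow (by norm_num) hu0.le, hus]; ring
            _ ≤ (2:ℝ) ^ ((1:ℝ)/2 + 2*ε) * C₁ * u ^ ((1:ℝ)/2 + ε) * C₂ := by
                apply mul_le_mul_of_nonneg_left (hC2 u hu0.le)
                positivity
            _ = (2:ℝ) ^ ((1:ℝ)/2 + 2*ε) * C₁ * C₂ * u ^ ((1:ℝ)/2 + ε) := by ring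
        have hbig : (2:ℝ) ^ ((1:ℝ)/2 + 2*ε) * C₁ * C₂
            ≤ (Real.sqrt 2 + |m| * (8/m^2)) + (2:ℝ) ^ ((1:ℝ)/2 + 2*ε) * C₁ * C₂ := by
          have : (0:ℝ) ≤ Real.sqrt 2 + |m| * (8/m^2) := by positivity
          linarith
        calc |z| * Real.exp (-(z - m*u) ^ 2 / (2*u))
            ≤ |z| * (Real.exp (-a) * Real.exp (-(m^2*u))) := h1
          _ ≤ (2:ℝ) ^ ((1:ℝ)/2 + 2*ε) * C₁ * C₂ * u ^ ((1:ℝ)/2 + ε) * |z| ^ (-(4*ε)) := hcore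
          _ ≤ ((Real.sqrt 2 + |m| * (8/m^2)) + (2:ℝ) ^ ((1:ℝ)/2 + 2*ε) * C₁ * C₂)
                * u ^ ((1:ℝ)/2 + ε) * |z| ^ (-(4*ε)) :=
              mul_le_mul_of_nonneg_right
                (mul_le_mul_of_nonneg_right hbig (Real.rpow_nonneg hu0.le _))
                (Real.rpow_nonneg (abs_nonneg z) _)
    · -- 1 < M
      have hK : (0:ℝ) < 4*m^2*(M-1)/M^2 := by
        apply div_pos
        · apply mul_pos (by nlinarith [hm2]) (by linarith)
        · positivity
      refine ⟨Real.sqrt 2 + |m - 2*m/M| * (2 / (4*m^2*(M-1)/M^2)),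
        ?_, fun u z hu hz => Or.inr ?_⟩
      · apply add_pos_of_pos_of_nonneg (Real.sqrt_pos.mpr (by norm_num))
        exact mul_nonneg (abs_nonneg _) (div_nonneg (by norm_num : (0:ℝ) ≤ 2) hK.le)
      have hu0 : (0:ℝ) < u := lt_of_lt_of_le one_pos hu
      have hid : -(z - m*u) ^ 2 / (2*u)
          = 2*m*z/M + (-(z - (m - 2*m/M)*u) ^ 2 / (2*u) + -(4*m^2*(M-1)/M^2*u/2)) := by
        field_simp
        ring
      have hsplit : |z| * Real.exp (-(z - m*u) ^ 2 / (2*u))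
          = |z| * Real.exp (-(z - (m - 2*m/M)*u) ^ 2 / (2*u))
              * Real.exp (-(4*m^2*(M-1)/M^2*u/2)) * Real.exp (2*m*z/M) := by
        rw [hid, Real.exp_add, Real.exp_add]; ring
      have hzb : |z| ≤ |z - (m - 2*m/M)*u| + |m - 2*m/M| * u := by
        calc |z| = |(z - (m - 2*m/M)*u) + (m - 2*m/M)*u| := by ring_nf
          _ ≤ |z - (m - 2*m/M)*u| + |(m - 2*m/M)*u| := abs_add_le _ _
          _ = |z - (m - 2*m/M)*u| + |m - 2*m/M| * u := by
              rw [abs_mul, abs_of_pos hu0]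
      have hpart1 : |z - (m - 2*m/M)*u| * Real.exp (-(z - (m - 2*m/M)*u) ^ 2 / (2*u))
          ≤ Real.sqrt 2 * Real.sqrt u := abs_mul_exp_le _ u hu0
      have hexpK1 : Real.exp (-(4*m^2*(M-1)/M^2*u/2)) ≤ 1 :=
        Real.exp_le_one_iff.mpr (by nlinarith [hK, hu0])
      have hexpG1 : Real.exp (-(z - (m - 2*m/M)*u) ^ 2 / (2*u)) ≤ 1 :=
        Real.exp_le_one_iff.mpr (div_nonpos_of_nonpos_of_nonneg
          (neg_nonpos_of_nonneg (sq_nonneg _)) (by positivity))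
      have hK2 : u * Real.exp (-(4*m^2*(M-1)/M^2*u/2)) ≤ 2 / (4*m^2*(M-1)/M^2) := by
        rw [le_div_iff₀ hK]
        nlinarith [texp_le (4*m^2*(M-1)/M^2*u/2) (by positivity)]
      have hcomb : |z| * Real.exp (-(z - (m - 2*m/M)*u) ^ 2 / (2*u))
            * Real.exp (-(4*m^2*(M-1)/M^2*u/2))
          ≤ Real.sqrt 2 * Real.sqrt u + |m - 2*m/M| * (2 / (4*m^2*(M-1)/M^2)) := by
        have e1 : (0:ℝ) ≤ Real.exp (-(z - (m - 2*m/M)*u) ^ 2 / (2*u)) := (Real.exp_pos _).le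
        have e2 : (0:ℝ) ≤ Real.exp (-(4*m^2*(M-1)/M^2*u/2)) := (Real.exp_pos _).le
        calc |z| * Real.exp (-(z - (m - 2*m/M)*u) ^ 2 / (2*u))
              * Real.exp (-(4*m^2*(M-1)/M^2*u/2))
            ≤ (|z - (m - 2*m/M)*u| + |m - 2*m/M| * u)
              * Real.exp (-(z - (m - 2*m/M)*u) ^ 2 / (2*u))
              * Real.exp (-(4*m^2*(M-1)/M^2*u/2)) := by
              apply mul_le_mul_of_nonneg_right _ e2
              exact mul_le_mul_of_nonneg_right hzb e1
          _ = |z - (m - 2*m/M)*u| * Real.exp (-(z - (m - 2*m/M)*u) ^ 2 / (2*u))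
                * Real.exp (-(4*m^2*(M-1)/M^2*u/2))
              + |m - 2*m/M| * (u * Real.exp (-(4*m^2*(M-1)/M^2*u/2)))
                * Real.exp (-(z - (m - 2*m/M)*u) ^ 2 / (2*u)) := by ring
          _ ≤ Real.sqrt 2 * Real.sqrt u * 1
              + |m - 2*m/M| * (2 / (4*m^2*(M-1)/M^2)) * 1 := by
              have b1 : |z - (m - 2*m/M)*u| * Real.exp (-(z - (m - 2*m/M)*u) ^ 2 / (2*u))
                  * Real.exp (-(4*m^2*(M-1)/M^2*u/2)) ≤ Real.sqrt 2 * Real.sqrt u * 1 := by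
                calc |z - (m - 2*m/M)*u| * Real.exp (-(z - (m - 2*m/M)*u) ^ 2 / (2*u))
                    * Real.exp (-(4*m^2*(M-1)/M^2*u/2))
                    ≤ Real.sqrt 2 * Real.sqrt u * Real.exp (-(4*m^2*(M-1)/M^2*u/2)) :=
                      mul_le_mul_of_nonneg_right hpart1 e2
                  _ ≤ Real.sqrt 2 * Real.sqrt u * 1 := by
                      apply mul_le_mul_of_nonneg_left hexpK1
                      positivity
              have b2 : |m - 2*m/M| * (u * Real.exp (-(4*m^2*(M-1)/M^2*u/2)))
                  * Real.exp (-(z - (m - 2*m/M)*u) ^ 2 / (2*u))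
                  ≤ |m - 2*m/M| * (2 / (4*m^2*(M-1)/M^2)) * 1 := by
                apply mul_le_mul
                · exact mul_le_mul_of_nonneg_left hK2 (abs_nonneg _)
                · exact hexpG1
                · exact e1
                · positivity
              linarith
          _ = Real.sqrt 2 * Real.sqrt u + |m - 2*m/M| * (2 / (4*m^2*(M-1)/M^2)) := by ring
      have hfin : Real.sqrt 2 * Real.sqrt u + |m - 2*m/M| * (2 / (4*m^2*(M-1)/M^2))
          ≤ (Real.sqrt 2 + |m - 2*m/M| * (2 / (4*m^2*(M-1)/M^2))) * u ^ ((1:ℝ)/2 + ε) := by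
        have hA := mul_le_mul_of_nonneg_left (hup u hu) (Real.sqrt_nonneg 2)
        have hB := mul_le_mul_of_nonneg_left (hone u hu)
          (mul_nonneg (abs_nonneg (m - 2*m/M)) (div_nonneg (by norm_num : (0:ℝ) ≤ 2) hK.le))
        nlinarith [hA, hB]
      rw [hsplit]
      exact mul_le_mul_of_nonneg_right (hcomb.trans hfin) (Real.exp_pos _).le

lemma key (m ε M : ℝ) (hε : 0 < ε) (hM : 1 ≤ M) :
    ∃ c : ℝ, 0 < c ∧ ∀ u z : ℝ, 0 < u → z ≠ 0 →
      |z| * Real.exp (-(z - m * u) ^ 2 / (2 * u)) ≤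
          c * u ^ ((1:ℝ)/2 + ε) * |z| ^ (-(4 * ε)) ∨
      |z| * Real.exp (-(z - m * u) ^ 2 / (2 * u)) ≤
          c * u ^ ((1:ℝ)/2 + ε) * Real.exp (2 * m * z / M) := by
  obtain ⟨cA, hcA, hA⟩ := caseA m ε hε
  obtain ⟨cB, hcB, hB⟩ := caseB m ε M hε hM
  refine ⟨cA + cB, by positivity, fun u z hu hz => ?_⟩
  have hT1 : (0:ℝ) ≤ u ^ ((1:ℝ)/2 + ε) * |z| ^ (-(4 * ε)) :=
    mul_nonneg (Real.rpow_nonneg hu.le _) (Real.rpow_nonneg (abs_nonneg z) _)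
  have hT2 : (0:ℝ) ≤ u ^ ((1:ℝ)/2 + ε) * Real.exp (2 * m * z / M) :=
    mul_nonneg (Real.rpow_nonneg hu.le _) (Real.exp_pos _).le
  rcases le_total u 1 with hu1 | hu1
  · left
    calc |z| * Real.exp (-(z - m * u) ^ 2 / (2 * u))
        ≤ cA * u ^ ((1:ℝ)/2 + ε) * |z| ^ (-(4 * ε)) := hA u z hu hu1 hz
      _ ≤ (cA + cB) * u ^ ((1:ℝ)/2 + ε) * |z| ^ (-(4 * ε)) := by
          rw [mul_assoc, mul_assoc]
          exact mul_le_mul_of_nonneg_right (by linarith) hT1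
  · rcases hB u z hu1 hz with h | h
    · left
      calc |z| * Real.exp (-(z - m * u) ^ 2 / (2 * u))
          ≤ cB * u ^ ((1:ℝ)/2 + ε) * |z| ^ (-(4 * ε)) := h
        _ ≤ (cA + cB) * u ^ ((1:ℝ)/2 + ε) * |z| ^ (-(4 * ε)) :=
            mul_le_mul_of_nonneg_right
              (mul_le_mul_of_nonneg_right (by linarith) (Real.rpow_nonneg hu.le _))
              (Real.rpow_nonneg (abs_nonneg z) _)
    · right
      calc |z| * Real.exp (-(z - m * u) ^ 2 / (2 * u))
          ≤ cB * u ^ ((1:ℝ)/2 + ε) * Real.exp (2 * m * z / M) := h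
        _ ≤ (cA + cB) * u ^ ((1:ℝ)/2 + ε) * Real.exp (2 * m * z / M) :=
            mul_le_mul_of_nonneg_right
              (mul_le_mul_of_nonneg_right (by linarith) (Real.rpow_nonneg hu.le _))
              (Real.exp_pos _).le

/-- For every ε > 0 and M ≥ 1 there is c > 0 (depending only on ε, M, m) such that
`f̃(u,z) ≤ c u^{-1+ε} (|z|^{-4ε} + exp(2mz/M))` for all u > 0 and z ≠ 0. -/
theorem stmt_1 (m : ℝ) (ε M : ℝ) (hε : 0 < ε) (hM : 1 ≤ M) :
    ∃ c : ℝ, 0 < c ∧ ∀ u z : ℝ, 0 < u → z ≠ 0 →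
      ftilde m u z ≤ c * u ^ (-1 + ε) * (|z| ^ (-(4 * ε)) + Real.exp (2 * m * z / M)) := by
  obtain ⟨c, hc, hkey⟩ := key m ε M hε hM
  refine ⟨c, hc, fun u z hu hz => ?_⟩
  have hT1 : (0:ℝ) ≤ |z| ^ (-(4 * ε)) := Real.rpow_nonneg (abs_nonneg z) _
  have hT2 : (0:ℝ) ≤ Real.exp (2 * m * z / M) := (Real.exp_pos _).le
  have hS0 : 0 < Real.sqrt (2 * π * u ^ 3) := Real.sqrt_pos.mpr (by positivity)
  have hS : u ^ ((3:ℝ)/2) ≤ Real.sqrt (2 * π * u ^ 3) := by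
    have h1 : u ^ ((3:ℝ)/2) = Real.sqrt (u ^ 3) := by
      rw [Real.sqrt_eq_rpow, ← Real.rpow_natCast u 3, ← Real.rpow_mul hu.le]
      norm_num
    rw [h1]
    apply Real.sqrt_le_sqrt
    nlinarith [Real.pi_gt_three, pow_pos hu 3]
  have hmul : (0:ℝ) ≤ c * u ^ (-1 + ε) :=
    mul_nonneg hc.le (Real.rpow_nonneg hu.le _)
  have main : ∀ T : ℝ, 0 ≤ T →
      |z| * Real.exp (-(z - m * u) ^ 2 / (2 * u)) ≤ c * u ^ ((1:ℝ)/2 + ε) * T →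
      |z| / Real.sqrt (2 * π * u ^ 3) * Real.exp (-(z - m * u) ^ 2 / (2 * u))
        ≤ c * u ^ (-1 + ε) * T := by
    intro T hT h
    rw [div_mul_eq_mul_div, div_le_iff₀ hS0]
    calc |z| * Real.exp (-(z - m * u) ^ 2 / (2 * u))
        ≤ c * u ^ ((1:ℝ)/2 + ε) * T := h
      _ = c * u ^ (-1 + ε) * T * u ^ ((3:ℝ)/2) := by
          rw [show ((1:ℝ)/2 + ε) = (-1 + ε) + 3/2 by ring, Real.rpow_add hu]
          ring
      _ ≤ c * u ^ (-1 + ε) * T * Real.sqrt (2 * π * u ^ 3) := by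
          apply mul_le_mul_of_nonneg_left hS
          exact mul_nonneg hmul hT
  rw [ftilde, if_pos hu]
  rcases hkey u z hu hz with h | h
  · calc |z| / Real.sqrt (2 * π * u ^ 3) * Real.exp (-(z - m * u) ^ 2 / (2 * u))
        ≤ c * u ^ (-1 + ε) * |z| ^ (-(4 * ε)) := main _ hT1 h
      _ ≤ c * u ^ (-1 + ε) * (|z| ^ (-(4 * ε)) + Real.exp (2 * m * z / M)) :=
          mul_le_mul_of_nonneg_left (by linarith) hmul
  · calc |z| / Real.sqrt (2 * π * u ^ 3) * Real.exp (-(z - m * u) ^ 2 / (2 * u))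
        ≤ c * u ^ (-1 + ε) * Real.exp (2 * m * z / M) := main _ hT2 h
      _ ≤ c * u ^ (-1 + ε) * (|z| ^ (-(4 * ε)) + Real.exp (2 * m * z / M)) :=
          mul_le_mul_of_nonneg_left (by linarith) hmul
end

section
/- Let m ∈ ℝ and define f̃(u,z) = (|z|/√(2πu³))·exp(−(z−mu)²/(2u)) for u > 0, f̃(u,z)=0 for u ≤ 0. For every ε > 0 and M ≥ 1 there exists a constant c̃ > 0 such that for all u > 0 and z ∈ ℝ with z ≠ 0: f̃(u,z) ≤ c̃·u^{−1+ε}·|z|^{−2ε}·exp(mz/M). -/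
open Real

/-- Auxiliary: `t^a e^{-bt}` is bounded on `(0,∞)` for `a, b > 0`. -/
lemma aux_rpow_exp_bound (a b : ℝ) (ha : 0 < a) (hb : 0 < b) :
    ∃ C : ℝ, 0 < C ∧ ∀ t : ℝ, 0 < t → t ^ a * Real.exp (-(b * t)) ≤ C := by
  obtain ⟨n, hn⟩ := exists_nat_ge a
  have hfb : (0:ℝ) < (n.factorial : ℝ) / b ^ n := by positivity
  refine ⟨1 + n.factorial / b ^ n, by positivity, fun t ht => ?_⟩
  rcases le_or_gt t 1 with h1 | h1
  · have h2 : t ^ a ≤ 1 := Real.rpow_le_one ht.le h1 ha.le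
    have h3 : Real.exp (-(b * t)) ≤ 1 := by
      rw [Real.exp_le_one_iff]; nlinarith
    have := mul_le_one₀ h2 (Real.exp_pos _).le h3
    linarith
  · have h2 : t ^ a ≤ t ^ (n : ℝ) := Real.rpow_le_rpow_of_exponent_le h1.le hn
    have h4 : t ^ (n : ℝ) = t ^ n := Real.rpow_natCast t n
    have h5 : t ^ n ≤ n.factorial / b ^ n * Real.exp (b * t) := by
      rw [div_mul_eq_mul_div, le_div_iff₀ (pow_pos hb n)]
      calc t ^ n * b ^ n = (b * t) ^ n := by rw [mul_pow]; ring
        _ ≤ Real.exp (b * t) * n.factorial := by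
            have h3 := Real.pow_div_factorial_le_exp (x := b * t) (by positivity) n
            rw [div_le_iff₀ (by positivity)] at h3
            exact h3
        _ = (n.factorial : ℝ) * Real.exp (b * t) := mul_comm _ _
    have h6 : t ^ a * Real.exp (-(b * t)) ≤ n.factorial / b ^ n := by
      rw [Real.exp_neg, mul_inv_le_iff₀ (Real.exp_pos _)]
      calc t ^ a ≤ t ^ n := h4 ▸ h2
        _ ≤ n.factorial / b ^ n * Real.exp (b * t) := h5
    linarith
/-- For every ε > 0 and M ≥ 1 there is c̃ > 0 such that
`f̃(u,z) ≤ c̃ u^{-1+ε} |z|^{-2ε} exp(mz/M)` for all u > 0 and z ≠ 0. -/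
theorem stmt_2 (m : ℝ) (ε M : ℝ) (hε : 0 < ε) (hM : 1 ≤ M) :
    ∃ c : ℝ, 0 < c ∧ ∀ u z : ℝ, 0 < u → z ≠ 0 →
      ftilde m u z ≤ c * u ^ (-1 + ε) * |z| ^ (-(2 * ε)) * Real.exp (m * z / M) := by
  have hM0 : (0:ℝ) < M := lt_of_lt_of_le one_pos hM
  set θ : ℝ := 1 - 1 / M with hθ
  have hθ0 : 0 ≤ θ := by
    rw [hθ]
    have : 1 / M ≤ 1 := by rw [div_le_one hM0]; exact hM
    linarith
  have hθ1 : θ < 1 := by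
    rw [hθ]
    have : 0 < 1 / M := by positivity
    linarith
  set δ : ℝ := 1 - θ ^ 2 with hδ
  have hδ0 : 0 < δ := by rw [hδ]; nlinarith
  obtain ⟨C, hC0, hC⟩ := aux_rpow_exp_bound (1/2 + ε) (δ/2) (by linarith) (by linarith)
  refine ⟨C / Real.sqrt (2 * π), by positivity, fun u z hu hz => ?_⟩
  have hπ : (0:ℝ) < π := Real.pi_pos
  have hz0 : (0:ℝ) < |z| := abs_pos.mpr hz
  have hdiv : m * z / M = m * z * (1 - θ) := by rw [hθ]; field_simp; ring
  -- Step 1: exponent bound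
  have hexp : Real.exp (-(z - m * u) ^ 2 / (2 * u)) ≤
      Real.exp (-(δ * z ^ 2) / (2 * u)) * Real.exp (m * z / M) := by
    rw [← Real.exp_add, Real.exp_le_exp, hdiv]
    have poly : -(z - m * u) ^ 2 ≤ -((1 - θ^2) * z ^ 2) + m * z * (1 - θ) * (2 * u) := by
      nlinarith [sq_nonneg (θ * z - m * u)]
    have poly' : -(z - m * u) ^ 2 ≤ -(δ * z ^ 2) + m * z * (1 - θ) * (2 * u) := by
      rw [hδ]; exact poly
    have h2u : (0:ℝ) < 2 * u := by positivity
    calc -(z - m * u) ^ 2 / (2 * u)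
        ≤ (-(δ * z ^ 2) + m * z * (1 - θ) * (2 * u)) / (2 * u) :=
          div_le_div_of_nonneg_right poly' h2u.le
      _ = -(δ * z ^ 2) / (2 * u) + m * z * (1 - θ) := by field_simp
  -- sqrt factorization
  have hsq3 : Real.sqrt (2 * π * u ^ 3) = Real.sqrt (2 * π) * u ^ ((3:ℝ)/2) := by
    rw [Real.sqrt_mul (by positivity) (u ^ 3)]
    congr 1
    rw [Real.sqrt_eq_rpow, ← Real.rpow_natCast u 3, ← Real.rpow_mul hu.le]
    norm_num
  have ht := hC (z ^ 2 / u) (by positivity)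
  have htpow : (z ^ 2 / u) ^ ((1:ℝ)/2 + ε) = |z| ^ (1 + 2 * ε) * u ^ (-(1/2 + ε)) := by
    rw [Real.div_rpow (by positivity) hu.le, div_eq_mul_inv, ← Real.rpow_neg hu.le]
    congr 1
    rw [← sq_abs, ← Real.rpow_natCast |z| 2, ← Real.rpow_mul hz0.le]
    congr 1
    push_cast
    ring
  have hexpht : Real.exp (-(δ/2 * (z ^ 2 / u))) = Real.exp (-(δ * z ^ 2) / (2 * u)) := by
    congr 1; field_simp
  rw [htpow, hexpht] at ht
  -- Step 2: polynomial bound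
  have hmain : |z| / Real.sqrt (2 * π * u ^ 3) * Real.exp (-(δ * z ^ 2) / (2 * u)) ≤
      C / Real.sqrt (2 * π) * u ^ (-1 + ε) * |z| ^ (-(2 * ε)) := by
    rw [hsq3, div_mul_eq_mul_div, div_le_iff₀ (by positivity)]
    have hs : (0:ℝ) < Real.sqrt (2 * π) := Real.sqrt_pos.mpr (by positivity)
    have hu2 : u ^ (-1 + ε) * u ^ ((3:ℝ)/2) = u ^ ((1:ℝ)/2 + ε) := by
      rw [← Real.rpow_add hu]; ring_nf
    have expand : C / Real.sqrt (2*π) * u ^ (-1 + ε) * |z| ^ (-(2*ε)) *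
        (Real.sqrt (2*π) * u ^ ((3:ℝ)/2)) = C * u ^ ((1:ℝ)/2 + ε) * |z| ^ (-(2*ε)) := by
      have : C / Real.sqrt (2*π) * u ^ (-1 + ε) * |z| ^ (-(2*ε)) *
          (Real.sqrt (2*π) * u ^ ((3:ℝ)/2)) =
          C * (Real.sqrt (2*π) / Real.sqrt (2*π)) * (u ^ (-1 + ε) * u ^ ((3:ℝ)/2)) *
            |z| ^ (-(2*ε)) := by ring
      rw [this, div_self hs.ne', hu2, mul_one]
    rw [expand]
    have h7 : |z| * Real.exp (-(δ * z ^ 2)/(2*u)) =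
        (|z| ^ (1 + 2*ε) * u ^ (-(1/2 + ε)) * Real.exp (-(δ * z ^ 2)/(2*u))) *
          (|z| ^ (-(2*ε)) * u ^ ((1:ℝ)/2 + ε)) := by
      rw [show |z| ^ (1 + 2*ε) * u ^ (-(1/2+ε)) * Real.exp (-(δ * z ^ 2)/(2*u)) *
          (|z| ^ (-(2*ε)) * u ^ ((1:ℝ)/2 + ε)) =
          (|z| ^ (1 + 2*ε) * |z| ^ (-(2*ε))) * (u ^ (-(1/2+ε)) * u ^ ((1:ℝ)/2 + ε)) *
          Real.exp (-(δ * z ^ 2)/(2*u)) by ring]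
      rw [← Real.rpow_add hz0, ← Real.rpow_add hu,
        show (1 + 2*ε) + -(2*ε) = (1:ℝ) by ring,
        show -(1/2+ε) + ((1:ℝ)/2 + ε) = (0:ℝ) by ring,
        Real.rpow_one, Real.rpow_zero, mul_one]
    rw [h7]
    have hpos : (0:ℝ) ≤ |z| ^ (-(2*ε)) * u ^ ((1:ℝ)/2 + ε) := by positivity
    calc (|z| ^ (1 + 2*ε) * u ^ (-(1/2+ε)) * Real.exp (-(δ * z ^ 2)/(2*u))) *
          (|z| ^ (-(2*ε)) * u ^ ((1:ℝ)/2 + ε))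
        ≤ C * (|z| ^ (-(2*ε)) * u ^ ((1:ℝ)/2 + ε)) := mul_le_mul_of_nonneg_right ht hpos
      _ = C * u ^ ((1:ℝ)/2 + ε) * |z| ^ (-(2*ε)) := by ring
  have hlhs : ftilde m u z = |z| / Real.sqrt (2 * π * u ^ 3) *
      Real.exp (-(z - m * u) ^ 2 / (2 * u)) := by simp [ftilde, hu]
  rw [hlhs]
  calc |z| / Real.sqrt (2 * π * u ^ 3) * Real.exp (-(z - m * u) ^ 2 / (2 * u))
      ≤ |z| / Real.sqrt (2 * π * u ^ 3) *
        (Real.exp (-(δ * z ^ 2) / (2 * u)) * Real.exp (m * z / M)) :=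
        mul_le_mul_of_nonneg_left hexp (by positivity)
    _ = (|z| / Real.sqrt (2 * π * u ^ 3) * Real.exp (-(δ * z ^ 2) / (2 * u))) *
        Real.exp (m * z / M) := by ring
    _ ≤ (C / Real.sqrt (2 * π) * u ^ (-1 + ε) * |z| ^ (-(2 * ε))) *
        Real.exp (m * z / M) := mul_le_mul_of_nonneg_right hmain (Real.exp_pos _).le
end

section
/- Let G be a standard Gaussian random variable, μ ∈ ℝ, σ > 0, and 0 < α < 1. Then there exist constants k₁, k₂ > 0 depending only on α such that E[|μ + σG|^{−α}] ≤ (k₁/σ)·|μ|^{1−α} + k₂·σ^{−α}. -/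
open Real MeasureTheory ProbabilityTheory Set
open scoped NNReal ENNReal

lemma aux_meas (α c : ℝ) : Measurable (fun x : ℝ => |x - c| ^ (-α)) :=
  ((measurable_id.sub_const c).abs).pow measurable_const

lemma aux_real_int (α : ℝ) (hα0 : 0 < α) (hα1 : α < 1) :
    IntervalIntegrable (fun x : ℝ => |x| ^ (-α)) volume (-1) 1 ∧
    ∫ x in (-1:ℝ)..1, |x| ^ (-α) = 2 / (1 - α) := by
  have hr : (-1:ℝ) < -α := by linarith
  have hint01 : IntervalIntegrable (fun x : ℝ => |x| ^ (-α)) volume 0 1 := by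
    refine (intervalIntegral.intervalIntegrable_rpow' (a := 0) (b := 1) hr).congr_ae ?_
    filter_upwards [ae_restrict_mem measurableSet_uIoc] with x hx
    rw [Set.uIoc_of_le (by norm_num : (0:ℝ) ≤ 1)] at hx
    rw [abs_of_pos hx.1]
  have hintm : IntervalIntegrable (fun x : ℝ => |x| ^ (-α)) volume (-1) 0 := by
    rw [IntervalIntegrable.iff_comp_neg]
    simpa [abs_neg] using hint01.symm
  have hval01 : ∫ x in (0:ℝ)..1, |x| ^ (-α) = 1 / (1 - α) := by
    rw [intervalIntegral.integral_congr (g := fun x : ℝ => x ^ (-α)) ?_]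
    · rw [integral_rpow (Or.inl hr)]
      rw [Real.zero_rpow (by linarith), Real.one_rpow]
      ring_nf
    · intro x hx
      rw [Set.uIcc_of_le (by norm_num : (0:ℝ) ≤ 1)] at hx
      simp [abs_of_nonneg hx.1]
  have hvalm : ∫ x in (-1:ℝ)..0, |x| ^ (-α) = 1 / (1 - α) := by
    have : ∫ x in (-1:ℝ)..0, |(-x)| ^ (-α) = ∫ x in (-0:ℝ)..(-(-1)), |x| ^ (-α) :=
      intervalIntegral.integral_comp_neg (fun x => |x| ^ (-α))
    simpa [abs_neg, hval01] using this
  refine ⟨hintm.trans hint01, ?_⟩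
  rw [← intervalIntegral.integral_add_adjacent_intervals hintm hint01, hval01, hvalm]
  ring

lemma aux_lint_aux (α : ℝ) (hα0 : 0 < α) (hα1 : α < 1) :
    ∫⁻ x in Ioo (-1:ℝ) 1, ENNReal.ofReal (|x| ^ (-α)) ≤ ENNReal.ofReal (2 / (1 - α)) := by
  obtain ⟨hint, hval⟩ := aux_real_int α hα0 hα1
  have hIoo : IntegrableOn (fun x : ℝ => |x| ^ (-α)) (Ioo (-1:ℝ) 1) volume := by
    rw [← intervalIntegrable_iff_integrableOn_Ioo_of_le (by norm_num : (-1:ℝ) ≤ 1)]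
    exact hint
  rw [← ofReal_integral_eq_lintegral_ofReal hIoo
    (ae_of_all _ fun x => Real.rpow_nonneg (abs_nonneg _) _)]
  apply ENNReal.ofReal_le_ofReal
  rw [← hval, intervalIntegral.integral_of_le (by norm_num : (-1:ℝ) ≤ 1),
    integral_Ioc_eq_integral_Ioo]

lemma aux_lint (α : ℝ) (hα0 : 0 < α) (hα1 : α < 1) (c : ℝ) :
    ∫⁻ g, ENNReal.ofReal (|g - c| ^ (-α)) ∂(gaussianReal 0 1)
      ≤ ENNReal.ofReal (1 + 2 / (1 - α)) := by
  have h1α : (0:ℝ) < 1 - α := by linarith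
  set h : ℝ → ENNReal :=
    fun y => Set.indicator (Ioo (-1:ℝ) 1) (fun y => ENNReal.ofReal (|y| ^ (-α))) y with hh
  have hmeas_h : Measurable h :=
    (((measurable_id.abs.pow measurable_const)).ennreal_ofReal).indicator measurableSet_Ioo
  have hpdf_le : ∀ x : ℝ, gaussianPDF 0 1 x ≤ 1 := by
    intro x
    rw [gaussianPDF, ENNReal.ofReal_le_one]
    unfold gaussianPDFReal
    have h2π : (1:ℝ) ≤ √(2 * π * ((1:ℝ≥0):ℝ)) := by
      rw [NNReal.coe_one, mul_one, show (1:ℝ) = √1 by simp]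
      exact Real.sqrt_le_sqrt (by nlinarith [Real.pi_gt_three])
    have hinv : (√(2 * π * ((1:ℝ≥0):ℝ)))⁻¹ ≤ 1 := inv_le_one_of_one_le₀ h2π
    have hinv0 : (0:ℝ) ≤ (√(2 * π * ((1:ℝ≥0):ℝ)))⁻¹ :=
      inv_nonneg.mpr (Real.sqrt_nonneg _)
    have he : rexp (-(x - 0) ^ 2 / (2 * ((1:ℝ≥0):ℝ))) ≤ 1 := by
      rw [Real.exp_le_one_iff, NNReal.coe_one]
      nlinarith [sq_nonneg (x - 0)]
    have he0 : (0:ℝ) < rexp (-(x - 0) ^ 2 / (2 * ((1:ℝ≥0):ℝ))) := Real.exp_pos _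
    nlinarith
  have hbound : ∀ x : ℝ, ENNReal.ofReal (|x - c| ^ (-α)) * gaussianPDF 0 1 x
      ≤ h (x - c) + gaussianPDF 0 1 x := by
    intro x
    rcases lt_or_ge (|x - c|) 1 with hlt | hge
    · have hmem : x - c ∈ Ioo (-1:ℝ) 1 := abs_lt.mp hlt
      have h1 : ENNReal.ofReal (|x - c| ^ (-α)) * gaussianPDF 0 1 x
          ≤ ENNReal.ofReal (|x - c| ^ (-α)) * 1 := mul_le_mul_right (hpdf_le x) _
      rw [mul_one] at h1
      refine h1.trans ?_
      rw [hh]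
      simp only [Set.indicator_of_mem hmem]
      exact le_self_add
    · have h1 : ENNReal.ofReal (|x - c| ^ (-α)) ≤ 1 := by
        exact ENNReal.ofReal_le_one.mpr
          (Real.rpow_le_one_of_one_le_of_nonpos hge (by linarith))
      refine le_trans (mul_le_mul_left h1 _) ?_
      rw [one_mul]
      exact le_add_self
  rw [gaussianReal_of_var_ne_zero 0 one_ne_zero,
    lintegral_withDensity_eq_lintegral_mul _ (measurable_gaussianPDF 0 1)
      ((aux_meas α c).ennreal_ofReal)]
  calc ∫⁻ x, gaussianPDF 0 1 x * ENNReal.ofReal (|x - c| ^ (-α))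
      ≤ ∫⁻ x, (h (x - c) + gaussianPDF 0 1 x) := by
        refine lintegral_mono fun x => ?_
        rw [mul_comm]; exact hbound x
    _ = (∫⁻ x, h (x - c)) + ∫⁻ x, gaussianPDF 0 1 x :=
        lintegral_add_left (hmeas_h.comp (measurable_id.sub_const c)) _
    _ = (∫⁻ y, h y) + 1 := by
        rw [lintegral_sub_right_eq_self h c, lintegral_gaussianPDF_eq_one 0 one_ne_zero]
    _ ≤ ENNReal.ofReal (2 / (1 - α)) + 1 := by
        gcongr
        rw [hh, lintegral_indicator measurableSet_Ioo]
        exact aux_lint_aux α hα0 hα1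
    _ ≤ ENNReal.ofReal (1 + 2 / (1 - α)) := by
        rw [show (1:ℝ≥0∞) = ENNReal.ofReal 1 by simp,
          ← ENNReal.ofReal_add (by positivity) (by norm_num)]
        apply ENNReal.ofReal_le_ofReal
        linarith

lemma aux_int (α : ℝ) (hα0 : 0 < α) (hα1 : α < 1) (c : ℝ) :
    ∫ g, |g - c| ^ (-α) ∂(gaussianReal 0 1) ≤ 1 + 2 / (1 - α) := by
  have h1α : (0:ℝ) < 1 - α := by linarith
  rw [integral_eq_lintegral_of_nonneg_ae
    (ae_of_all _ fun g => Real.rpow_nonneg (abs_nonneg _) _)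
    (aux_meas α c).aestronglyMeasurable]
  exact ENNReal.toReal_le_of_le_ofReal (by positivity) (aux_lint α hα0 hα1 c)

/-- For a standard Gaussian `G` and `0 < α < 1`, there are constants `k₁, k₂ > 0`
depending only on `α` with `E[|μ+σG|^{-α}] ≤ k₁ σ⁻¹ |μ|^{1-α} + k₂ σ^{-α}` for all
`μ ∈ ℝ`, `σ > 0`. -/
theorem stmt_5 (α : ℝ) (hα0 : 0 < α) (hα1 : α < 1) :
    ∃ k₁ k₂ : ℝ, 0 < k₁ ∧ 0 < k₂ ∧ ∀ (μ σ : ℝ), 0 < σ →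
      (∫ g, |μ + σ * g| ^ (-α) ∂(gaussianReal 0 1))
        ≤ k₁ / σ * |μ| ^ (1 - α) + k₂ * σ ^ (-α) := by
  have h1α : (0:ℝ) < 1 - α := by linarith
  refine ⟨1, 1 + 2 / (1 - α), one_pos, by positivity, fun μ σ hσ => ?_⟩
  have key : ∀ g : ℝ, |μ + σ * g| ^ (-α) = σ ^ (-α) * |g - (-(μ / σ))| ^ (-α) := by
    intro g
    have h1 : μ + σ * g = σ * (g - (-(μ / σ))) := by field_simp; ring
    rw [h1, abs_mul, abs_of_pos hσ, Real.mul_rpow hσ.le (abs_nonneg _)]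
  calc (∫ g, |μ + σ * g| ^ (-α) ∂(gaussianReal 0 1))
      = σ ^ (-α) * ∫ g, |g - (-(μ / σ))| ^ (-α) ∂(gaussianReal 0 1) := by
        simp_rw [key]
        exact integral_const_mul _ _
    _ ≤ σ ^ (-α) * (1 + 2 / (1 - α)) :=
        mul_le_mul_of_nonneg_left (aux_int α hα0 hα1 _) (Real.rpow_nonneg hσ.le _)
    _ ≤ 1 / σ * |μ| ^ (1 - α) + (1 + 2 / (1 - α)) * σ ^ (-α) := by
        have : (0:ℝ) ≤ 1 / σ * |μ| ^ (1 - α) := by positivity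
        linarith [mul_comm (σ ^ (-α)) (1 + 2 / (1 - α))]
end

section
/- Let X̃_t = mt + W_t, let F_Y be the distribution function of Y₁, and x > 0. Then lim_{s→0⁺} E[F_Y((x − X̃_s)⁻)] = (F_Y(x) + F_Y(x⁻))/2, where F_Y(z⁻) denotes the left limit of F_Y at z. -/
open Real MeasureTheory ProbabilityTheory Filter

open Function Set in

-- left-continuity of leftLim for monotone F
open Function Set in
lemma aux_left {F : ℝ → ℝ} (hF : Monotone F) (x : ℝ) :
    Tendsto (leftLim F) (nhdsWithin x (Set.Iio x)) (nhds (leftLim F x)) := by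
  have h1 : Tendsto (fun t => F (2*t - x)) (nhdsWithin x (Set.Iio x)) (nhds (leftLim F x)) := by
    have ht : Tendsto (fun t : ℝ => 2*t - x) (nhdsWithin x (Set.Iio x)) (nhdsWithin x (Set.Iio x)) := by
      apply tendsto_nhdsWithin_of_tendsto_nhds_of_eventually_within
      · have : Tendsto (fun t : ℝ => 2*t - x) (nhds x) (nhds (2*x - x)) := by
          exact (tendsto_id.const_mul 2).sub_const x
        simpa [two_mul] using this.mono_left nhdsWithin_le_nhds
      · filter_upwards [self_mem_nhdsWithin] with t ht
        simp only [Set.mem_Iio] at *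
        linarith
    exact (hF.tendsto_leftLim x).comp ht
  have h2 : Tendsto F (nhdsWithin x (Set.Iio x)) (nhds (leftLim F x)) := hF.tendsto_leftLim x
  refine tendsto_of_tendsto_of_tendsto_of_le_of_le' h1 h2 ?_ ?_
  · filter_upwards [self_mem_nhdsWithin] with t ht
    exact hF.le_leftLim (by simp at ht ⊢; linarith)
  · filter_upwards with t
    exact hF.leftLim_le le_rfl

open Function Set in
lemma aux_right {F : ℝ → ℝ} (hF : Monotone F) {x : ℝ}
    (hFrc : ContinuousWithinAt F (Set.Ici x) x) :
    Tendsto (leftLim F) (nhdsWithin x (Set.Ioi x)) (nhds (F x)) := by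
  have h2 : Tendsto F (nhdsWithin x (Set.Ioi x)) (nhds (F x)) :=
    hFrc.mono_left (nhdsWithin_mono x Set.Ioi_subset_Ici_self)
  refine tendsto_of_tendsto_of_tendsto_of_le_of_le' tendsto_const_nhds h2 ?_ ?_
  · filter_upwards [self_mem_nhdsWithin] with t ht
    exact hF.le_leftLim ht
  · filter_upwards with t
    exact hF.leftLim_le le_rfl

open Function Set in
lemma aux_half : ((gaussianReal 0 1) (Set.Ioi (0:ℝ))).toReal = 1/2 := by
  set ν := gaussianReal 0 1 with hν
  have hmap : Measure.map (fun z : ℝ => -1 * z) ν = ν := by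
    rw [hν, gaussianReal_map_const_mul (-1)]
    norm_num
  have hsym : ν (Set.Iio 0) = ν (Set.Ioi 0) := by
    conv_lhs => rw [← hmap]
    rw [Measure.map_apply (by fun_prop) measurableSet_Iio]
    congr 1
    ext z
    simp
  have h0 : ν ({(0:ℝ)} : Set ℝ) = 0 := by
    refine gaussianReal_absolutelyContinuous 0 one_ne_zero ?_
    simp
  have hsum : ν (Set.Iio 0) + ν (Set.Ioi 0) = 1 := by
    rw [← measure_union ((Set.Iio_disjoint_Ici le_rfl).mono_right Set.Ioi_subset_Ici_self)
      measurableSet_Ioi,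
      Set.Iio_union_Ioi, measure_compl (measurableSet_singleton 0) (measure_ne_top _ _), h0,
      measure_univ, tsub_zero]
  rw [hsym, ← two_mul] at hsum
  have := congrArg ENNReal.toReal hsum
  rw [ENNReal.toReal_mul] at this
  simp only [ENNReal.toReal_ofNat, ENNReal.toReal_one] at this
  linarith

open Function Set in
lemma aux_tendsto_nhds (m x z : ℝ) :
    Tendsto (fun s : ℝ => x - (m*s + Real.sqrt s * z)) (nhdsWithin 0 (Set.Ioi 0)) (nhds x) := by
  have : Tendsto (fun s : ℝ => x - (m*s + Real.sqrt s * z)) (nhds 0) (nhds (x - (m*0 + Real.sqrt 0 * z))) := by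
    exact tendsto_const_nhds.sub (((tendsto_id.const_mul m)).add
      ((Real.continuous_sqrt.tendsto 0).mul_const z))
  simpa using this.mono_left nhdsWithin_le_nhds

open Function Set in
lemma aux_sign (m z : ℝ) (hz : z ≠ 0) :
    ∀ᶠ s : ℝ in nhdsWithin 0 (Set.Ioi 0),
      (0 < z → 0 < m*s + Real.sqrt s * z) ∧ (z < 0 → m*s + Real.sqrt s * z < 0) := by
  have hs : ∀ᶠ s : ℝ in nhdsWithin 0 (Set.Ioi 0), Real.sqrt s < |z| / (|m| + 1) := by
    have hpos : (0:ℝ) < |z| / (|m| + 1) := by positivity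
    have : Tendsto Real.sqrt (nhdsWithin 0 (Set.Ioi 0)) (nhds 0) := by
      simpa using (Real.continuous_sqrt.tendsto 0).mono_left nhdsWithin_le_nhds
    filter_upwards [this.eventually (eventually_lt_nhds hpos)] with s h using h
  filter_upwards [hs, self_mem_nhdsWithin] with s hsmall hspos
  simp only [Set.mem_Ioi] at hspos
  have hsq : Real.sqrt s > 0 := Real.sqrt_pos.mpr hspos
  have key : |m * Real.sqrt s| < |z| := by
    rw [abs_mul]
    calc |m| * |Real.sqrt s| ≤ (|m|+1) * Real.sqrt s := by
          rw [abs_of_pos hsq]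
          exact mul_le_mul_of_nonneg_right (by linarith) hsq.le
      _ < (|m|+1) * (|z| / (|m|+1)) := by
          exact mul_lt_mul_of_pos_left hsmall (by positivity)
      _ = |z| := by field_simp
  have hrw : m*s + Real.sqrt s * z = Real.sqrt s * (m * Real.sqrt s + z) := by
    have h := Real.mul_self_sqrt hspos.le
    linear_combination (-m) * h
  constructor
  · intro hzpos
    rw [hrw]
    have : 0 < m * Real.sqrt s + z := by
      rcases abs_lt.mp key with ⟨h1, h2⟩
      rw [abs_of_pos hzpos] at h1
      linarith
    positivity
  · intro hzneg
    rw [hrw]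
    have : m * Real.sqrt s + z < 0 := by
      rcases abs_lt.mp key with ⟨h1, h2⟩
      rw [abs_of_neg hzneg] at h2
      linarith
    exact mul_neg_of_pos_of_neg hsq this

/-- For `X̃_s = ms + W_s` and a distribution function `F` (monotone, right-continuous,
bounded between 0 and 1), for `x > 0`:
`lim_{s→0⁺} E[F((x - X̃_s)⁻)] = (F(x) + F(x⁻))/2`. -/
theorem stmt_16 {Ω : Type*} [MeasureSpace Ω] [IsProbabilityMeasure (ℙ : Measure Ω)]
    (m : ℝ) (W : ℝ → Ω → ℝ)
    -- W is a standard Brownian motion: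
    (hWmeas : ∀ t, Measurable (W t))
    (hW0 : ∀ ω, W 0 ω = 0)
    (hWcont : ∀ ω, Continuous fun t => W t ω)
    (hWlaw : ∀ s t : ℝ, 0 ≤ s → s ≤ t →
      Measure.map (fun ω => W t ω - W s ω) ℙ = gaussianReal 0 (Real.toNNReal (t - s)))
    (hWindep : ∀ (n : ℕ) (u : ℕ → ℝ), Monotone u →
      iIndepFun (fun i : Fin n => fun ω => W (u (i + 1)) ω - W (u i) ω) ℙ)
    (F : ℝ → ℝ) (hFmono : Monotone F)
    (hFrc : ∀ z : ℝ, ContinuousWithinAt F (Set.Ici z) z)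
    (hF0 : ∀ z, 0 ≤ F z) (hF1 : ∀ z, F z ≤ 1)
    (x : ℝ) (hx : 0 < x) :
    Tendsto (fun s : ℝ => ∫ ω, Function.leftLim F (x - (m * s + W s ω)) ∂(ℙ : Measure Ω))
      (nhdsWithin 0 (Set.Ioi 0))
      (nhds ((F x + Function.leftLim F x) / 2)) := by
  set G := Function.leftLim F with hG
  set ν := gaussianReal 0 1 with hν
  have hGmono : Monotone G := hFmono.leftLim
  have hGmeas : Measurable G := hGmono.measurable
  have hG0 : ∀ w, 0 ≤ G w := fun w =>
    le_trans (hF0 (w-1)) (hFmono.le_leftLim (by linarith))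
  have hG1 : ∀ w, G w ≤ 1 := fun w => le_trans (hFmono.leftLim_le le_rfl) (hF1 w)
  -- change of variables
  have hEq : (fun s : ℝ => ∫ ω, G (x - (m * s + W s ω)) ∂(ℙ : Measure Ω)) =ᶠ[nhdsWithin 0 (Set.Ioi 0)]
      (fun s : ℝ => ∫ z, G (x - (m * s + Real.sqrt s * z)) ∂ν) := by
    filter_upwards [self_mem_nhdsWithin] with s hs
    simp only [Set.mem_Ioi] at hs
    have hlaw : Measure.map (W s) ℙ = gaussianReal 0 s.toNNReal := by
      have h := hWlaw 0 s le_rfl hs.le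
      simp only [hW0, sub_zero] at h
      exact h
    have hscale : Measure.map (fun z : ℝ => Real.sqrt s * z) ν = gaussianReal 0 s.toNNReal := by
      rw [hν, gaussianReal_map_const_mul]
      congr 1
      · ring
      · rw [mul_one]
        ext
        simp [Real.sq_sqrt hs.le, Real.coe_toNNReal _ hs.le]
    have hmeas1 : Measurable fun y : ℝ => G (x - (m*s + y)) :=
      hGmeas.comp ((measurable_id.const_add (m*s)).const_sub x)
    calc ∫ ω, G (x - (m * s + W s ω)) ∂(ℙ : Measure Ω)
        = ∫ y, G (x - (m*s + y)) ∂(Measure.map (W s) ℙ) :=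
          (integral_map (hWmeas s).aemeasurable hmeas1.aestronglyMeasurable).symm
      _ = ∫ y, G (x - (m*s + y)) ∂(Measure.map (fun z : ℝ => Real.sqrt s * z) ν) := by
          rw [hlaw, hscale]
      _ = ∫ z, G (x - (m*s + Real.sqrt s * z)) ∂ν :=
          integral_map (measurable_const_mul _).aemeasurable hmeas1.aestronglyMeasurable
  have hae : ∀ᵐ z ∂ν, z ≠ (0:ℝ) := by
    have h0 : ν ({(0:ℝ)} : Set ℝ) = 0 :=
      gaussianReal_absolutelyContinuous 0 one_ne_zero (by simp)
    rw [ae_iff]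
    convert h0 using 2
    ext z
    simp
  have hlim : Tendsto (fun s : ℝ => ∫ z, G (x - (m * s + Real.sqrt s * z)) ∂ν)
      (nhdsWithin 0 (Set.Ioi 0))
      (nhds (∫ z, (if 0 < z then G x else F x) ∂ν)) := by
    apply tendsto_integral_filter_of_dominated_convergence (fun _ => (1:ℝ))
    · filter_upwards with s
      exact (hGmeas.comp (by fun_prop : Measurable fun z : ℝ => x - (m*s + Real.sqrt s * z))).aestronglyMeasurable
    · filter_upwards with s
      filter_upwards with z
      rw [Real.norm_eq_abs, abs_le]
      constructor
      · linarith [hG0 (x - (m*s + Real.sqrt s * z))]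
      · exact hG1 _
    · exact integrable_const 1
    · filter_upwards [hae] with z hz
      rcases lt_or_gt_of_ne hz with hneg | hpos
      · rw [if_neg (not_lt.mpr hneg.le)]
        have hu : Tendsto (fun s : ℝ => x - (m*s + Real.sqrt s * z))
            (nhdsWithin 0 (Set.Ioi 0)) (nhdsWithin x (Set.Ioi x)) := by
          apply tendsto_nhdsWithin_of_tendsto_nhds_of_eventually_within
          · exact aux_tendsto_nhds m x z
          · filter_upwards [aux_sign m z hz] with s hsgn
            have := hsgn.2 hneg
            simp only [Set.mem_Ioi]
            linarith
        exact (aux_right hFmono (hFrc x)).comp hu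
      · rw [if_pos hpos]
        have hu : Tendsto (fun s : ℝ => x - (m*s + Real.sqrt s * z))
            (nhdsWithin 0 (Set.Ioi 0)) (nhdsWithin x (Set.Iio x)) := by
          apply tendsto_nhdsWithin_of_tendsto_nhds_of_eventually_within
          · exact aux_tendsto_nhds m x z
          · filter_upwards [aux_sign m z hz] with s hsgn
            have := hsgn.1 hpos
            simp only [Set.mem_Iio]
            linarith
        exact (aux_left hFmono x).comp hu
  have hint : ∫ z, (if 0 < z then G x else F x) ∂ν = (F x + G x) / 2 := by
    have hfun : (fun z : ℝ => if 0 < z then G x else F x)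
        = fun z => F x + (Set.Ioi (0:ℝ)).indicator (fun _ => G x - F x) z := by
      funext z
      by_cases h : 0 < z <;> simp [h, Set.indicator_apply]
    rw [hfun, integral_add (integrable_const _)
      ((integrable_const _).indicator measurableSet_Ioi),
      integral_indicator_const _ measurableSet_Ioi, integral_const]
    simp only [measure_univ, ENNReal.toReal_one, one_smul, smul_eq_mul]
    have h2 : (ν (Set.Ioi (0:ℝ))).toReal = 1/2 := by rw [hν]; exact aux_half
    rw [measureReal_def, measureReal_def, measure_univ, ENNReal.toReal_one, h2]
    ring
  rw [hint] at hlim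
  exact hlim.congr' hEq.symm
end
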